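/- For every m ≥ 0, the image of the cube [0,1]^m under the map α ↦ (β₀, …, β_{m−1}) defined by β_i = ∏_{k=i}^{m−1} α_k equals the set { β ∈ ℝ^m : 0 ≤ β₀ ≤ β₁ ≤ ⋯ ≤ β_{m−1} ≤ 1 } of monotone nondecreasing vectors in [0,1]^m. -/

import Mathlib

/-- The image of the cube `[0,1]^m` under the suffix-product map
`α ↦ β` with `β i = ∏_{k=i}^{m-1} α_k` equals the set of monotone
nondecreasing vectors `0 ≤ β₀ ≤ β₁ ≤ ⋯ ≤ β_{m−1} ≤ 1` in `[0,1]^m`. -/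
theorem suffix_prod_image_cube (m : ℕ) :
    (fun α : Fin m → ℝ => fun i : Fin m => ∏ k ∈ Finset.Ici i, α k) ''
      {α : Fin m → ℝ | ∀ k, α k ∈ Set.Icc (0 : ℝ) 1} =
    {β : Fin m → ℝ | Monotone β ∧ ∀ i, β i ∈ Set.Icc (0 : ℝ) 1} := by
  ext β
  constructor
  · rintro ⟨α, hα, rfl⟩
    refine ⟨?_, ?_⟩
    · intro i j hij
      have hsub : Finset.Ici j ⊆ Finset.Ici i := Finset.Ici_subset_Ici.2 hij
      simp only
      rw [← Finset.prod_sdiff hsub]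
      have h1 : ∏ k ∈ Finset.Ici i \ Finset.Ici j, α k ≤ 1 :=
        Finset.prod_le_one (fun k _ => (hα k).1) (fun k _ => (hα k).2)
      have h2 : (0:ℝ) ≤ ∏ k ∈ Finset.Ici j, α k :=
        Finset.prod_nonneg fun k _ => (hα k).1
      calc (∏ k ∈ Finset.Ici i \ Finset.Ici j, α k) * ∏ k ∈ Finset.Ici j, α k
          ≤ 1 * ∏ k ∈ Finset.Ici j, α k := mul_le_mul_of_nonneg_right h1 h2
        _ = _ := one_mul _
    · intro i
      exact ⟨Finset.prod_nonneg fun k _ => (hα k).1,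
        Finset.prod_le_one (fun k _ => (hα k).1) (fun k _ => (hα k).2)⟩
  · rintro ⟨hmono, hbd⟩
    set g : ℕ → ℝ := fun i => if h : i < m then β ⟨i, h⟩ else 1 with hg
    have hg0 : ∀ i, 0 ≤ g i := by
      intro i; simp only [hg]; split
      · exact (hbd _).1
      · exact zero_le_one
    have hg1 : ∀ i, g i ≤ 1 := by
      intro i; simp only [hg]; split
      · exact (hbd _).2
      · exact le_refl 1
    have hgstep : ∀ i, g i ≤ g (i + 1) := by
      intro i
      by_cases h : i + 1 < m
      · have h' : i < m := by omega
        simp only [hg, dif_pos h, dif_pos h']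
        exact hmono (by simp [Fin.le_def])
      · simp only [hg, dif_neg h]
        exact hg1 i
    set a : ℕ → ℝ := fun k => if g (k + 1) = 0 then 0 else g k / g (k + 1) with ha
    have ha01 : ∀ k, a k ∈ Set.Icc (0 : ℝ) 1 := by
      intro k
      simp only [ha]
      split
      · exact ⟨le_refl 0, zero_le_one⟩
      · rename_i h
        have hpos : 0 < g (k + 1) := lt_of_le_of_ne (hg0 _) (Ne.symm h)
        constructor
        · exact div_nonneg (hg0 k) (le_of_lt hpos)
        · rw [div_le_one hpos]; exact hgstep k
    have key : ∀ d i, i + d = m → ∏ k ∈ Finset.Ico i m, a k = g i := by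
      intro d
      induction d with
      | zero =>
        intro i hi
        subst hi
        simp [hg]
      | succ n ih =>
        intro i hi
        have hilt : i < m := by omega
        rw [Finset.prod_eq_prod_Ico_succ_bot hilt, ih (i + 1) (by omega)]
        simp only [ha]
        by_cases h : g (i + 1) = 0
        · rw [if_pos h, h, mul_zero]
          have := hgstep i
          have := hg0 i
          linarith [hgstep i, hg0 i, h ▸ hgstep i]
        · rw [if_neg h, div_mul_cancel₀ _ h]
    refine ⟨fun i => a i.val, fun k => ha01 k.val, ?_⟩
    funext i
    have hmap : ∏ k ∈ Finset.Ici i, a k.val = ∏ k ∈ Finset.Ico i.val m, a k := by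
      have h1 : Finset.Ico i.val m = Finset.Icc i.val (m - 1) := by
        rw [← Finset.Ico_add_one_right_eq_Icc]
        have := i.isLt
        congr 1
        omega
      rw [← Fin.map_valEmbedding_Ici, Finset.prod_map]
      rfl
    simp only [hmap]
    rw [key (m - i.val) i.val (by omega)]
    simp [hg, i.isLt]
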